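/- Define, for Ω ∈ (−1, 0], the branches ω⁺(Ω) := πΩ/2 + arccos(−(Ω+1)·sin(πΩ/2)) and, on the domain where (Ω+3)·|sin(πΩ/2)| ≤ 1, ω⁻(Ω) := πΩ/2 − arccos(−(Ω+3)·sin(πΩ/2)). Then: (i) there exist ε₀ > 0 and a unique continuous function Ω⁺ : (0, ε₀) → (−1, 0] satisfying Ω⁺(ε) = ε·(ω⁺(Ω⁺(ε)) − 3π/2) for all ε ∈ (0, ε₀), and the associated control value B₀₁⁺(ε) := −sin²(π·Ω⁺(ε)/2)/cos(ω⁺(Ω⁺(ε))) satisfies B₀₁⁺(ε) = −(π/2)²·ε − 3·(π/2)³·ε² + o(ε²) as ε → 0⁺; (ii) there exist ε₀ > 0 and a unique continuous function Ω⁻ : (0, ε₀) → (−1, 0] satisfying Ω⁻(ε) = ε·(ω⁻(Ω⁻(ε)) − π/2) for all ε ∈ (0, ε₀), and the associated control value B₁₁⁻(ε) := −sin²(π·Ω⁻(ε)/2)/cos(ω⁻(Ω⁻(ε))) satisfies B₁₁⁻(ε) = −(π/2)²·ε + (π/2)³·ε² + o(ε²) as ε → 0⁺. In particular B₀₁⁺(ε)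 < B₁₁⁻(ε) < 0 for all sufficiently small ε > 0. -/

import Mathlib

open Real Filter Asymptotics

/-- The branch `ω⁺(Ω) = πΩ/2 + arccos(-(Ω+1) sin(πΩ/2))` (case `m = 0`). -/
noncomputable def omegaPlus (Ω : ℝ) : ℝ :=
  π*Ω/2 + Real.arccos (-(Ω+1) * Real.sin (π*Ω/2))

/-- The branch `ω⁻(Ω) = πΩ/2 - arccos(-(Ω+3) sin(πΩ/2))` (case `m = 1`). -/
noncomputable def omegaMinus (Ω : ℝ) : ℝ :=
  π*Ω/2 - Real.arccos (-(Ω+3) * Real.sin (π*Ω/2))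

/-- The scaled control value `B = -sin²(πΩ/2)/cos(ω)` at frequency `Ω` on branch `ω`. -/
noncomputable def Bval (ω : ℝ → ℝ) (Ω : ℝ) : ℝ :=
  -(Real.sin (π*Ω/2))^2 / Real.cos (ω Ω)


open scoped NNReal
set_option maxHeartbeats 2000000

lemma sin_est {x : ℝ} (hx : |x| ≤ 1) : |Real.sin x - x| ≤ |x|^3 / 4 := by
  rcases le_or_gt 0 x with h | h
  · rcases eq_or_lt_of_le h with rfl | hp
    · simp
    · have h1 := Real.sin_lt hp
      have h2 : x - x^3/4 < Real.sin x := by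
          have := Real.sin_gt_sub_cube hp; nlinarith [pow_pos hp 3]
      rw [abs_of_nonneg h, abs_sub_comm, abs_of_nonneg (by linarith)]
      nlinarith
  · have hp : 0 < -x := by linarith
    have h1 := Real.sin_lt hp
    have h2 : -x - (-x)^3/4 < Real.sin (-x) := by
      have := Real.sin_gt_sub_cube hp; nlinarith [pow_pos hp 3]
    rw [Real.sin_neg] at h1 h2
    rw [abs_of_neg h, abs_of_nonneg (by nlinarith)]
    nlinarith

lemma arcsin_le_one_of {v : ℝ} (h0 : 0 ≤ v) (h : v ≤ 1/2) : Real.arcsin v ≤ 1 := by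
  have hsin1 : (1:ℝ)/2 ≤ Real.sin 1 := by
    have := Real.sin_gt_sub_cube (by norm_num : (0:ℝ) < 1)
    norm_num at this; linarith
  calc Real.arcsin v ≤ Real.arcsin (Real.sin 1) := Real.monotone_arcsin (by linarith)
    _ = 1 := Real.arcsin_sin (by linarith [Real.pi_gt_three]) (by linarith [Real.pi_gt_three])

lemma arcsin_est_nonneg {v : ℝ} (h0 : 0 ≤ v) (h : v ≤ 1/2) : |Real.arcsin v - v| ≤ v^3 := by
  rcases eq_or_lt_of_le h0 with rfl | hp
  · simp
  · set θ := Real.arcsin v with hθ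
    have hθpos : 0 < θ := Real.arcsin_pos.2 hp
    have hθ1 : θ ≤ 1 := arcsin_le_one_of h0 h
    have hsθ : Real.sin θ = v := Real.sin_arcsin (by linarith) (by linarith)
    have h1 : Real.sin θ < θ := Real.sin_lt hθpos
    have h2 : θ - θ^3/4 < Real.sin θ := by have := Real.sin_gt_sub_cube hθpos; nlinarith [pow_pos hθpos 3]
    have hcube : θ^3 ≤ θ := by nlinarith [mul_nonneg (mul_nonneg hθpos.le hθpos.le) (sub_nonneg.2 hθ1), mul_nonneg hθpos.le (sub_nonneg.2 hθ1)]
    have hθv : θ < 4*v/3 := by linarith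
    have hc2 : θ^3 < (4*v/3)^3 := by
      have := pow_lt_pow_left₀ hθv (le_of_lt hθpos) (n := 3) (by norm_num)
      exact this
    have hv3 : (0:ℝ) ≤ v^3 := by positivity
    rw [abs_of_nonneg (by linarith)]
    nlinarith

lemma arcsin_est {v : ℝ} (h : |v| ≤ 1/2) : |Real.arcsin v - v| ≤ |v|^3 := by
  rcases le_or_gt 0 v with h0 | h0
  · rw [abs_of_nonneg h0] at h ⊢; exact arcsin_est_nonneg h0 h
  · have := arcsin_est_nonneg (v := -v) (by linarith) (by rw [abs_of_neg h0] at h; linarith)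
    rw [Real.arcsin_neg] at this
    rw [abs_of_neg h0]
    calc |Real.arcsin v - v| = |(-Real.arcsin v) - (-v)| := by rw [← abs_neg]; ring_nf
      _ ≤ (-v)^3 := this
      _ = (-v)^3 := rfl

lemma abs_arcsin_le_one {v : ℝ} (h : |v| ≤ 1/2) : |Real.arcsin v| ≤ 1 := by
  rcases le_or_gt 0 v with h0 | h0
  · rw [abs_of_nonneg (Real.arcsin_nonneg.2 h0)]
    exact arcsin_le_one_of h0 (by rwa [abs_of_nonneg h0] at h)
  · rw [abs_of_neg (Real.arcsin_lt_zero.2 h0), ← Real.arcsin_neg]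
    exact arcsin_le_one_of (by linarith) (by rw [abs_of_neg h0] at h; linarith)

lemma arcsin_lip {a b : ℝ} (ha : |a| ≤ 1/2) (hb : |b| ≤ 1/2) :
    |Real.arcsin a - Real.arcsin b| ≤ 3 * |a - b| := by
  wlog hab : b ≤ a generalizing a b
  · rw [abs_sub_comm, abs_sub_comm a b]; exact this hb ha (by linarith)
  set α := Real.arcsin a
  set β := Real.arcsin b
  have hαβ : β ≤ α := Real.monotone_arcsin hab
  have hα1 : |α| ≤ 1 := abs_arcsin_le_one ha
  have hβ1 : |β| ≤ 1 := abs_arcsin_le_one hb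
  have hsa : Real.sin α = a := Real.sin_arcsin (by cases abs_le.1 ha; linarith) (by cases abs_le.1 ha; linarith)
  have hsb : Real.sin β = b := Real.sin_arcsin (by cases abs_le.1 hb; linarith) (by cases abs_le.1 hb; linarith)
  have key : a - b = 2 * Real.sin ((α - β)/2) * Real.cos ((α + β)/2) := by
    rw [← hsa, ← hsb, Real.sin_sub_sin]
  rw [abs_le] at hα1 hβ1
  have hcos : (1:ℝ)/2 ≤ Real.cos ((α + β)/2) := by
    have := Real.one_sub_sq_div_two_le_cos (x := (α + β)/2)
    nlinarith
  have hd2 : 0 ≤ (α - β)/2 ∧ (α - β)/2 ≤ 1 := by constructor <;> [linarith; linarith]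
  have hsin : (3/8) * (α - β) ≤ Real.sin ((α - β)/2) := by
    rcases eq_or_lt_of_le hd2.1 with he | hp
    · rw [← he]; simp [← he]; linarith
    · have : (α - β)/2 - ((α - β)/2)^3/4 < Real.sin ((α - β)/2) := by
          have := Real.sin_gt_sub_cube hp; nlinarith [pow_pos hp 3]
      have hcube : ((α-β)/2)^3 ≤ (α-β)/2 := by nlinarith [mul_nonneg (mul_nonneg hp.le hp.le) (sub_nonneg.2 hd2.2), mul_nonneg hp.le (sub_nonneg.2 hd2.2)]
      linarith
  have hab2 : (3/8) * (α - β) * 1 ≤ a - b := by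
    rcases eq_or_lt_of_le hαβ with he | hlt
    · rw [he]; simp; linarith [hsa, hsb, he]
    · have hsinpos : 0 < Real.sin ((α-β)/2) := Real.sin_pos_of_pos_of_lt_pi (by linarith) (by nlinarith [Real.pi_gt_three])
      nlinarith
  rw [abs_of_nonneg (by linarith : (0:ℝ) ≤ α - β), abs_of_nonneg (by linarith)]
  linarith

lemma abs_sin_sub_sin (a b : ℝ) : |Real.sin a - Real.sin b| ≤ |a - b| := by
  rw [Real.sin_sub_sin]
  have h1 : |Real.sin ((a-b)/2)| ≤ |(a-b)/2| := Real.abs_sin_le_abs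
  have h2 : |Real.cos ((a+b)/2)| ≤ 1 := Real.abs_cos_le_one _
  rw [abs_mul, abs_mul]
  have : |(a-b)/2| = |a-b|/2 := by rw [abs_div]; norm_num
  rw [this] at h1
  rw [abs_two]
  calc 2 * |Real.sin ((a-b)/2)| * |Real.cos ((a+b)/2)|
      ≤ 2 * (|a-b|/2) * 1 := by
        apply mul_le_mul (by gcongr) h2 (abs_nonneg _) (by positivity)
    _ = |a-b| := by ring

lemma absP_eq {Ω : ℝ} (h2 : Ω ≤ 0) : |π*Ω/2| = (π/2)*|Ω| := by
  have : π*Ω/2 = (π/2)*Ω := by ring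
  rw [this, abs_mul, abs_of_pos (by positivity : (0:ℝ) < π/2)]

lemma u_bound {k Ω : ℝ} (hk1 : 1 ≤ k) (hk3 : k ≤ 3) (hΩ : Ω ∈ Set.Icc (-(1:ℝ)/10) 0) :
    |(-(Ω+k)*Real.sin (π*Ω/2))| ≤ 1/2 := by
  obtain ⟨h1, h2⟩ := hΩ
  have hpi := Real.pi_lt_d2
  have hs : |Real.sin (π*Ω/2)| ≤ |π*Ω/2| := Real.abs_sin_le_abs
  have hP : |π*Ω/2| ≤ π/20 := by
    rw [absP_eq h2, abs_of_nonpos h2]; nlinarith [Real.pi_pos]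
  have hΩk : |Ω + k| ≤ 3 := by rw [abs_le]; constructor <;> linarith
  rw [abs_mul, abs_neg]
  nlinarith [abs_nonneg (Real.sin (π*Ω/2)), abs_nonneg (Ω+k), Real.pi_pos]

lemma arcsin_u_est {k Ω : ℝ} (hk1 : 1 ≤ k) (hk3 : k ≤ 3) (hΩ : Ω ∈ Set.Icc (-(1:ℝ)/10) 0) :
    |Real.arcsin (-(Ω+k)*Real.sin (π*Ω/2)) - (-(k*π*Ω/2 + π*Ω^2/2))| ≤ 109*|Ω|^3 := by
  obtain ⟨h1, h2⟩ := hΩ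
  have hpi := Real.pi_lt_d2
  have hpi2 := Real.pi_gt_d6
  set P := π*Ω/2 with hP
  set u := -(Ω+k)*Real.sin P with hu
  have habsP : |P| = (π/2)*|Ω| := absP_eq h2
  have hP1 : |P| ≤ 1 := by
    rw [habsP, abs_of_nonpos h2]; nlinarith
  have hr2 : |Real.sin P - P| ≤ |P|^3/4 := sin_est hP1
  have hub : |u| ≤ 1/2 := u_bound hk1 hk3 ⟨h1, h2⟩
  have hr1 : |Real.arcsin u - u| ≤ |u|^3 := arcsin_est hub
  have hOk : |Ω + k| ≤ 3 := by rw [abs_le]; constructor <;> linarith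
  have hu3 : |u| ≤ 3*|P| := by
    rw [hu, abs_mul, abs_neg]
    nlinarith [Real.abs_sin_le_abs (x := P), abs_nonneg (Real.sin P), abs_nonneg (Ω+k),
      abs_nonneg P]
  have hkey : Real.arcsin u - (-(k*π*Ω/2 + π*Ω^2/2))
      = (Real.arcsin u - u) - (Ω+k)*(Real.sin P - P) := by
    rw [hu, hP]; ring
  rw [hkey]
  have hP3 : |P|^3 ≤ 3.91 * |Ω|^3 := by
    rw [habsP, mul_pow]
    have hc : (π/2)^3 ≤ (3.15/2)^3 := by
      apply pow_le_pow_left₀ (by positivity) (by linarith)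
    nlinarith [pow_nonneg (abs_nonneg Ω) 3]
  have hstep : |(Real.arcsin u - u) - (Ω+k)*(Real.sin P - P)|
      ≤ |Real.arcsin u - u| + |Ω+k| * |Real.sin P - P| := by
    rw [← abs_mul]; exact abs_sub _ _
  have hu3' : |u|^3 ≤ 27*|P|^3 := by
    have := pow_le_pow_left₀ (abs_nonneg u) hu3 3
    nlinarith [this]
  have h3 : |Ω+k| * |Real.sin P - P| ≤ 3 * (|P|^3/4) := by
    nlinarith [abs_nonneg (Ω+k), abs_nonneg (Real.sin P - P), pow_nonneg (abs_nonneg P) 3]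
  nlinarith [pow_nonneg (abs_nonneg Ω) 3, pow_nonneg (abs_nonneg P) 3]

private lemma cube_mono {x c a : ℝ} (h : |x| ≤ c*a) : |x|^3 ≤ c^3*a^3 := by
  have := pow_le_pow_left₀ (abs_nonneg x) h 3
  calc |x|^3 ≤ (c*a)^3 := this
    _ = c^3*a^3 := by ring

set_option maxHeartbeats 2000000 in
lemma Bval_est (ω : ℝ → ℝ) (c s Ω : ℝ)
    (hcos : Real.cos (ω Ω) = -Real.sin (s*(ω Ω - c + π)))
    (hR : |s*(ω Ω - c + π) - (π*Ω + π*Ω^2/2)| ≤ 110*|Ω|^3)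
    (hΩ1 : -(7:ℝ)/100 ≤ Ω) (hΩ2 : Ω ≤ 0) :
    |Bval ω Ω - (π*Ω/4 - π*Ω^2/8)| ≤ 50*|Ω|^3 := by
  rcases eq_or_lt_of_le hΩ2 with rfl | hneg
  · simp [Bval]
  have hpi : π ≤ 315/100 := by linarith [Real.pi_lt_d2]
  have hpi2 : (314:ℝ)/100 ≤ π := by linarith [Real.pi_gt_d6]
  obtain ⟨a, hadef⟩ : ∃ a : ℝ, a = -Ω := ⟨_, rfl⟩
  have hΩa : Ω = -a := by rw [hadef]; ring
  have ha0 : 0 < a := by linarith only [hadef.ge, hΩa, hneg]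
  have ha7 : a ≤ 7/100 := by linarith only [hΩa, hΩ1]
  have habs : |Ω| = a := by rw [abs_of_neg hneg, hadef]
  rw [habs] at hR ⊢
  have ha2n : (0:ℝ) ≤ a^2 := by positivity
  have ha3n : (0:ℝ) ≤ a^3 := by positivity
  have ha4n : (0:ℝ) ≤ a^4 := by positivity
  have ha2 : a^2 ≤ 49/10000 := by
    have h := pow_le_pow_left₀ ha0.le ha7 2
    have : ((7:ℝ)/100)^2 = 49/10000 := by norm_num
    linarith only [h, this]
  have ha2a : a^2 ≤ (7/100)*a := by
    have h := mul_le_mul_of_nonneg_right ha7 ha0.le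
    have : a^2 = a*a := by ring
    linarith only [h, this]
  have ha3 : a^3 ≤ (49/10000)*a := by
    have h := mul_le_mul_of_nonneg_right ha2 ha0.le
    have : a^3 = a^2*a := by ring
    linarith only [h, this]
  have ha4 : a^4 ≤ (49/10000)*a^2 := by
    have h := mul_le_mul_of_nonneg_right ha2 ha2n
    have : a^4 = a^2*a^2 := by ring
    linarith only [h, this]
  have hπa : π*a ≤ (315/100)*a := mul_le_mul_of_nonneg_right hpi ha0.le
  have hπalb : (314/100)*a ≤ π*a := mul_le_mul_of_nonneg_right hpi2 ha0.le
  have hπan : (0:ℝ) ≤ π*a := mul_nonneg Real.pi_pos.le ha0.le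
  have hπa2 : π*a^2 ≤ (315/100)*a^2 := mul_le_mul_of_nonneg_right hpi ha2n
  have hπa2lb : (0:ℝ) ≤ π*a^2 := mul_nonneg Real.pi_pos.le ha2n
  obtain ⟨θ, hθdef⟩ : ∃ θ : ℝ, θ = s*(ω Ω - c + π) := ⟨_, rfl⟩
  rw [← hθdef] at hcos hR
  obtain ⟨A, hAdef⟩ : ∃ A : ℝ, A = π*Ω + π*Ω^2/2 := ⟨_, rfl⟩
  rw [← hAdef] at hR
  have hRa := abs_le.1 hR
  have hAub : A ≤ -3*a := by
    rw [hAdef, hΩa]; linarith only [hπalb, hπa2, ha2a, ha0]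
  have hAlb : -(16/5)*a ≤ A := by
    rw [hAdef, hΩa]; linarith only [hπa, hπa2lb, ha0]
  have hθub : θ ≤ -(12/5)*a := by linarith only [hRa.2, ha3, hAub, ha0]
  have hθlb : -(15/4)*a ≤ θ := by linarith only [hRa.1, ha3, hAlb, ha0]
  have hθabs : |θ| ≤ (15/4)*a :=
    abs_le.2 ⟨by linarith only [hθlb], by linarith only [hθub, ha0]⟩
  have hθ1 : |θ| ≤ 1 := by linarith only [hθabs, ha7, ha0]
  have hθ3 : |θ|^3 ≤ (15/4)^3*a^3 := cube_mono hθabs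
  have hr3 : |Real.sin θ - θ| ≤ |θ|^3/4 := sin_est hθ1
  have hr3' : |Real.sin θ - θ| ≤ (14:ℝ)*a^3 := by
    have hc : ((15:ℝ)/4)^3 = 3375/64 := by norm_num
    linarith only [hθ3, hr3, hc, ha3n]
  have hr3a : |Real.sin θ - θ| ≤ (7/100)*a := by linarith only [hr3', ha3, ha0]
  set D := Real.cos (ω Ω) with hDdef
  clear_value D
  have hsinθ := abs_le.1 hr3a
  have hDpos : (23/10)*a ≤ D := by
    rw [hcos]; linarith only [hsinθ.2, hθub, ha0]
  have hD0 : 0 < D := by linarith only [hDpos, ha0]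
  obtain ⟨P, hPdef⟩ : ∃ P : ℝ, P = π*Ω/2 := ⟨_, rfl⟩
  have hPneg : π*(-a)/2 ≤ 0 := by linarith only [hπan]
  have hPa : |P| = (π/2)*a := by
    rw [hPdef, hΩa, abs_of_nonpos hPneg]; ring
  have hP1 : |P| ≤ 1 := by rw [hPa]; linarith only [hπa, ha7, ha0]
  have hr2 : |Real.sin P - P| ≤ |P|^3/4 := sin_est hP1
  have hP158 : |P| ≤ (158/100)*a := by rw [hPa]; linarith only [hπa, ha0]
  have hP3 : |P|^3 ≤ (158/100)^3*a^3 := cube_mono hP158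
  have hr2' : |Real.sin P - P| ≤ a^3 := by
    have hc : ((158:ℝ)/100)^3 = 3944312/1000000 := by norm_num
    linarith only [hP3, hr2, hc, ha3n]
  obtain ⟨N, hNdef⟩ : ∃ N : ℝ, N = (Real.sin P)^2 := ⟨_, rfl⟩
  have heN : |N - P^2| ≤ (33/10)*a^4 := by
    have hfact : N - P^2 = (Real.sin P - P)*(Real.sin P + P) := by rw [hNdef]; ring
    have hsum : |Real.sin P + P| ≤ a^3 + 2*((158/100)*a) := by
      calc |Real.sin P + P| = |(Real.sin P - P) + 2*P| := by ring_nf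
        _ ≤ |Real.sin P - P| + |2*P| := abs_add_le _ _
        _ ≤ a^3 + 2*((158/100)*a) := by
            rw [abs_mul, (by norm_num : |(2:ℝ)| = 2)]
            linarith only [hr2', hP158]
    have hsum' : |Real.sin P + P| ≤ (32/10)*a := by linarith only [hsum, ha3, ha0]
    rw [hfact, abs_mul]
    have h1 : |Real.sin P - P| * |Real.sin P + P| ≤ a^3 * ((32/10)*a) :=
      mul_le_mul hr2' hsum' (abs_nonneg _) ha3n
    have h2 : a^3 * ((32/10)*a) = (32/10)*a^4 := by ring
    linarith only [h1, h2, ha4n]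
  obtain ⟨T, hTdef⟩ : ∃ T : ℝ, T = π*Ω/4 - π*Ω^2/8 := ⟨_, rfl⟩
  rw [← hTdef]
  have hTabs : |T| ≤ (82/100)*a := by
    rw [hTdef, hΩa]
    have h1 : π*(-a)/4 - π*(-a)^2/8 ≤ (82/100)*a := by
      have he : π*(-a)/4 - π*(-a)^2/8 = -(π*a)/4 - (π*a^2)/8 := by ring
      rw [he]; linarith only [hπan, hπa2lb, ha0]
    have h2 : -((82/100)*a) ≤ π*(-a)/4 - π*(-a)^2/8 := by
      have he : π*(-a)/4 - π*(-a)^2/8 = -(π*a)/4 - (π*a^2)/8 := by ring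
      rw [he]; linarith only [hπa, hπa2, ha2a, ha0]
    exact abs_le.2 ⟨h2, h1⟩
  have heD : |D - (-A)| ≤ (124:ℝ)*a^3 := by
    have hh : D - (-A) = (A - θ) - (Real.sin θ - θ) := by rw [hcos]; ring
    rw [hh]
    calc |(A - θ) - (Real.sin θ - θ)| ≤ |A - θ| + |Real.sin θ - θ| := abs_sub _ _
      _ ≤ 110*a^3 + 14*a^3 := by
          refine add_le_add ?_ hr3'
          rw [abs_sub_comm]; exact hR
      _ = 124*a^3 := by ring
  have hkey : N + T*D = π^2*Ω^4/16 + (N - P^2) + T*(D - (-A)) := by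
    rw [hTdef, hPdef, hAdef]; ring
  have hnum : |N + T*D| ≤ 106*a^4 := by
    rw [hkey]
    have hpisq : π^2 ≤ 10 := by
      have h := pow_le_pow_left₀ Real.pi_pos.le hpi 2
      have : ((315:ℝ)/100)^2 = 99225/10000 := by norm_num
      linarith only [h, this]
    have h1 : |π^2*Ω^4/16| ≤ (63/100)*a^4 := by
      rw [abs_of_nonneg (by positivity), hΩa]
      have h4 : π^2*(-a)^4/16 = (π^2)*a^4/16 := by ring
      rw [h4]
      have hm := mul_le_mul_of_nonneg_right hpisq ha4n
      linarith only [hm, ha4n]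
    have h2 : |T*(D - (-A))| ≤ ((82/100)*a)*(124*a^3) := by
      rw [abs_mul]
      exact mul_le_mul hTabs heD (abs_nonneg _) (by positivity)
    have h2' : ((82/100)*a)*(124*a^3) = (10168/100)*a^4 := by ring
    calc |π^2*Ω^4/16 + (N - P^2) + T*(D - (-A))|
        ≤ (|π^2*Ω^4/16| + |N - P^2|) + |T*(D - (-A))| :=
          le_trans (abs_add_le _ _) (by gcongr; exact abs_add_le _ _)
      _ ≤ 106*a^4 := by linarith only [h1, heN, h2, h2', ha4n]
  have hBeq : Bval ω Ω - T = -((N + T*D)/D) := by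
    rw [Bval, ← hPdef, ← hNdef, ← hDdef]
    field_simp
    ring
  rw [hBeq, abs_neg, abs_div, abs_of_pos hD0]
  calc |N + T*D| / D ≤ (106*a^4) / ((23/10)*a) := by
        apply div_le_div₀ (by positivity) hnum (by positivity) hDpos
    _ ≤ 50*a^3 := by
        rw [div_le_iff₀ (by positivity)]
        have he : 50*a^3*((23/10)*a) = 115*a^4 := by ring
        linarith only [he, ha4n]

lemma pi_abs_mul {x y : ℝ} (h : |x| ≤ y) : |π*x| ≤ (315/100)*y := by
  rw [abs_mul, abs_of_pos Real.pi_pos]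
  have hpi : π ≤ 315/100 := by linarith [Real.pi_lt_d2]
  exact mul_le_mul hpi h (abs_nonneg x) (by norm_num)

set_option maxHeartbeats 2000000 in
lemma branch (ω : ℝ → ℝ) (c s : ℝ) (hs : s = 1 ∨ s = -1)
    (hcont : Continuous ω)
    (hrange : ∀ Ω ∈ Set.Ioc (-1:ℝ) 0, ω Ω - c ∈ Set.Icc (-(2*π)) (-(π/2)))
    (hexp : ∀ Ω ∈ Set.Icc (-(7:ℝ)/100) 0, |s*(ω Ω - c + π) - (π*Ω + π*Ω^2/2)| ≤ 110*|Ω|^3)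
    (hcos : ∀ Ω, Real.cos (ω Ω) = -Real.sin (s*(ω Ω - c + π)))
    (hlip : ∀ Ω₁ ∈ Set.Icc (-(7:ℝ)/100) 0, ∀ Ω₂ ∈ Set.Icc (-(7:ℝ)/100) 0,
      |ω Ω₁ - ω Ω₂| ≤ 40*|Ω₁ - Ω₂|) :
    ∃ f : ℝ → ℝ, ContinuousOn f (Set.Ioo 0 (1/100)) ∧
      (∀ ε ∈ Set.Ioo (0:ℝ) (1/100), f ε ∈ Set.Ioc (-1:ℝ) 0 ∧ f ε = ε * (ω (f ε) - c)) ∧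
      (∀ g : ℝ → ℝ,
        (∀ ε ∈ Set.Ioo (0:ℝ) (1/100), g ε ∈ Set.Ioc (-1:ℝ) 0 ∧ g ε = ε * (ω (g ε) - c)) →
        ∀ ε ∈ Set.Ioo (0:ℝ) (1/100), g ε = f ε) ∧
      (∀ ε ∈ Set.Ioo (0:ℝ) (1/100),
        |Bval ω (f ε) - (-(π/2)^2*ε - (2*s+1)*(π/2)^3*ε^2)| ≤ 13000*ε^3) := by
  have hpi : π ≤ 315/100 := by linarith [Real.pi_lt_d2]
  have hpi2 : (314:ℝ)/100 ≤ π := by linarith [Real.pi_gt_d6]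
  have hpip := Real.pi_pos
  -- localization of any solution
  have hloc : ∀ ε ∈ Set.Ioo (0:ℝ) (1/100), ∀ x, x ∈ Set.Ioc (-1:ℝ) 0 →
      x = ε * (ω x - c) → -(2*π)*ε ≤ x ∧ x ≤ -(π/2)*ε := by
    intro ε hε x hx hfix
    obtain ⟨h1, h2⟩ := hrange x hx
    constructor
    · rw [hfix]
      have := mul_le_mul_of_nonneg_left h1 hε.1.le
      linarith only [this]
    · rw [hfix]
      have := mul_le_mul_of_nonneg_left h2 hε.1.le
      linarith only [this]
  have hIcc : ∀ ε ∈ Set.Ioo (0:ℝ) (1/100), ∀ x, x ∈ Set.Ioc (-1:ℝ) 0 →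
      x = ε * (ω x - c) → x ∈ Set.Icc (-(7:ℝ)/100) 0 := by
    intro ε hε x hx hfix
    obtain ⟨hl, hu⟩ := hloc ε hε x hx hfix
    constructor
    · have hπε : π*ε ≤ (315/100)*(1/100) := by
        have h1 := mul_le_mul_of_nonneg_left hε.2.le hpip.le
        have h2 := mul_le_mul_of_nonneg_right hpi (by norm_num : (0:ℝ) ≤ 1/100)
        linarith only [h1, h2]
      linarith only [hl, hπε]
    · have hπε : 0 ≤ π*ε := mul_nonneg hpip.le hε.1.le
      linarith only [hu, hπε]
  -- uniqueness of solutions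
  have huniq : ∀ ε ∈ Set.Ioo (0:ℝ) (1/100), ∀ x y,
      x ∈ Set.Ioc (-1:ℝ) 0 → x = ε * (ω x - c) →
      y ∈ Set.Ioc (-1:ℝ) 0 → y = ε * (ω y - c) → x = y := by
    intro ε hε x y hx hfx hy hfy
    have hxI := hIcc ε hε x hx hfx
    have hyI := hIcc ε hε y hy hfy
    have hl := hlip x hxI y hyI
    have hd : x - y = ε * (ω x - ω y) := by
      conv_lhs => rw [hfx, hfy]
      ring
    have habs : |x - y| = ε * |ω x - ω y| := by
      rw [hd, abs_mul, abs_of_pos hε.1]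
    have h40 : ε * |ω x - ω y| ≤ (1/100) * (40*|x-y|) := by
      apply mul_le_mul hε.2.le hl (abs_nonneg _) (by norm_num)
    have : |x - y| ≤ 0 := by linarith only [habs, h40]
    have := abs_nonneg (x - y)
    have hz : |x - y| = 0 := le_antisymm ‹|x-y| ≤ 0› this
    have := abs_eq_zero.1 hz
    linarith only [this]
  -- existence of solutions
  have hex : ∀ ε ∈ Set.Ioo (0:ℝ) (1/100), ∃ x, x ∈ Set.Ioc (-1:ℝ) 0 ∧
      x = ε * (ω x - c) := by
    intro ε hε
    obtain ⟨hε0, hε1⟩ := hε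
    set h : ℝ → ℝ := fun x => x - ε * (ω x - c) with hhdef
    have hhc : ContinuousOn h (Set.Icc (-(2*π)*ε) 0) :=
      (continuous_id.sub (continuous_const.mul (hcont.sub continuous_const))).continuousOn
    have hab : -(2*π)*ε ≤ 0 := by nlinarith
    have hmem : -(2*π)*ε ∈ Set.Ioc (-1:ℝ) 0 := by
      constructor
      · nlinarith
      · exact hab
    have h0mem : (0:ℝ) ∈ Set.Ioc (-1:ℝ) 0 := by norm_num
    have hha : h (-(2*π)*ε) ≤ 0 := by
      have := (hrange _ hmem).1
      simp only [hhdef]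
      have h2 := mul_le_mul_of_nonneg_left this hε0.le
      linarith only [h2]
    have hhb : 0 ≤ h 0 := by
      have := (hrange _ h0mem).2
      simp only [hhdef]
      have h2 := mul_le_mul_of_nonneg_left this hε0.le
      nlinarith
    have := intermediate_value_Icc hab hhc
    have h0 : (0:ℝ) ∈ Set.Icc (h (-(2*π)*ε)) (h 0) := ⟨hha, hhb⟩
    obtain ⟨x, hxI, hx0⟩ := this h0
    refine ⟨x, ⟨?_, hxI.2⟩, ?_⟩
    · calc (-1:ℝ) < -(2*π)*ε := by nlinarith
        _ ≤ x := hxI.1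
    · simp only [hhdef] at hx0
      linarith only [hx0]
  -- the function f
  set f : ℝ → ℝ := fun ε => if hε : ε ∈ Set.Ioo (0:ℝ) (1/100) then (hex ε hε).choose else 0
    with hfdef
  have hfix : ∀ ε ∈ Set.Ioo (0:ℝ) (1/100), f ε ∈ Set.Ioc (-1:ℝ) 0 ∧
      f ε = ε * (ω (f ε) - c) := by
    intro ε hε
    have : f ε = (hex ε hε).choose := by simp only [hfdef]; exact dif_pos hε
    rw [this]
    exact (hex ε hε).choose_spec
  -- Lipschitz estimate and continuity
  have hlipf : ∀ ε₁ ∈ Set.Ioo (0:ℝ) (1/100), ∀ ε₂ ∈ Set.Ioo (0:ℝ) (1/100),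
      |f ε₁ - f ε₂| ≤ 11 * |ε₁ - ε₂| := by
    intro ε₁ h₁ ε₂ h₂
    obtain ⟨hx, hfx⟩ := hfix ε₁ h₁
    obtain ⟨hy, hfy⟩ := hfix ε₂ h₂
    have hxI := hIcc ε₁ h₁ _ hx hfx
    have hyI := hIcc ε₂ h₂ _ hy hfy
    have hl := hlip _ hxI _ hyI
    have hrx := hrange _ hx
    have hrabs : |ω (f ε₁) - c| ≤ 2*π := by
      rw [abs_le]; exact ⟨by linarith only [hrx.1], by linarith only [hrx.2, hpip]⟩
    have hd : f ε₁ - f ε₂ = (ε₁ - ε₂) * (ω (f ε₁) - c) + ε₂ * (ω (f ε₁) - ω (f ε₂)) := by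
      conv_lhs => rw [hfx, hfy]
      ring
    have h1 : |(ε₁ - ε₂) * (ω (f ε₁) - c)| ≤ |ε₁ - ε₂| * (2*π) := by
      rw [abs_mul]; exact mul_le_mul_of_nonneg_left hrabs (abs_nonneg _)
    have h2 : |ε₂ * (ω (f ε₁) - ω (f ε₂))| ≤ (1/100) * (40*|f ε₁ - f ε₂|) := by
      rw [abs_mul, abs_of_pos h₂.1]
      exact mul_le_mul h₂.2.le hl (abs_nonneg _) (by norm_num)
    have h3 : |f ε₁ - f ε₂| ≤ |ε₁ - ε₂| * (2*π) + (1/100)*(40*|f ε₁ - f ε₂|) := by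
      calc |f ε₁ - f ε₂| = |(ε₁ - ε₂) * (ω (f ε₁) - c) + ε₂ * (ω (f ε₁) - ω (f ε₂))| := by
            rw [← hd]
        _ ≤ |(ε₁ - ε₂) * (ω (f ε₁) - c)| + |ε₂ * (ω (f ε₁) - ω (f ε₂))| := abs_add_le _ _
        _ ≤ |ε₁ - ε₂| * (2*π) + (1/100)*(40*|f ε₁ - f ε₂|) := add_le_add h1 h2
    have hπd : |ε₁ - ε₂| * (2*π) ≤ |ε₁-ε₂| *(63/10) :=
      mul_le_mul_of_nonneg_left (by linarith only [hpi]) (abs_nonneg _)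
    linarith only [h3, hπd, abs_nonneg (ε₁ - ε₂)]
  have hfcont : ContinuousOn f (Set.Ioo 0 (1/100)) := by
    apply LipschitzOnWith.continuousOn (K := 11)
    rw [lipschitzOnWith_iff_dist_le_mul]
    intro x hx y hy
    rw [Real.dist_eq, Real.dist_eq]
    have := hlipf x hx y hy
    calc |f x - f y| ≤ 11 * |x - y| := this
      _ = ((11:ℝ≥0):ℝ) * |x - y| := by norm_num
  refine ⟨f, hfcont, hfix, ?_, ?_⟩
  · intro g hg ε hε
    obtain ⟨hgI, hgfix⟩ := hg ε hε
    obtain ⟨hfI, hffix⟩ := hfix ε hε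
    exact huniq ε hε _ _ hgI hgfix hfI hffix
  -- the expansion
  intro ε hε
  obtain ⟨hε0, hε1⟩ := hε
  have hε2 : ε^2 ≤ (1/100)*ε := by nlinarith
  have hε3 : ε^3 ≤ (1/100)*ε^2 := by nlinarith
  have hε4 : ε^4 ≤ (1/100)*ε^3 := by nlinarith
  have hε2n : (0:ℝ) ≤ ε^2 := by positivity
  have hε3n : (0:ℝ) ≤ ε^3 := by positivity
  obtain ⟨hΩIoc, hΩfix⟩ := hfix ε ⟨hε0, hε1⟩
  set Ω := f ε with hΩdef
  clear_value Ω
  have hΩIcc := hIcc ε ⟨hε0, hε1⟩ _ hΩIoc hΩfix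
  obtain ⟨hΩl, hΩu⟩ := hloc ε ⟨hε0, hε1⟩ _ hΩIoc hΩfix
  have hΩabs : |Ω| ≤ (63/10)*ε := by
    rw [abs_le]
    constructor
    · have : (2*π)*ε ≤ (63/10)*ε := by
        apply mul_le_mul_of_nonneg_right _ hε0.le; linarith only [hpi]
      linarith only [hΩl, this]
    · have : 0 ≤ (π/2)*ε := by positivity
      linarith only [hΩu, this, hε0.le]
  have hΩabs2 : |Ω|^2 ≤ (3969/100)*ε^2 := by
    have := pow_le_pow_left₀ (abs_nonneg Ω) hΩabs 2
    calc |Ω|^2 ≤ ((63/10)*ε)^2 := this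
      _ = (3969/100)*ε^2 := by ring
  have hΩabs3 : |Ω|^3 ≤ (250047/1000)*ε^3 := by
    have := pow_le_pow_left₀ (abs_nonneg Ω) hΩabs 3
    calc |Ω|^3 ≤ ((63/10)*ε)^3 := this
      _ = (250047/1000)*ε^3 := by ring
  have hR := hexp Ω hΩIcc
  obtain ⟨R, hRdef⟩ : ∃ R : ℝ, R = s*(ω Ω - c + π) - (π*Ω + π*Ω^2/2) := ⟨_, rfl⟩
  rw [← hRdef] at hR
  have hRabs : |R| ≤ 110*((250047/1000)*ε^3) := by
    calc |R| ≤ 110*|Ω|^3 := hR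
      _ ≤ 110*((250047/1000)*ε^3) := by linarith only [hΩabs3]
  have hsabs : |s| = 1 := by rcases hs with rfl | rfl <;> norm_num
  have hs2 : s*s = 1 := by rcases hs with rfl | rfl <;> norm_num
  have hX : ω Ω - c = -π + s*((π*Ω + π*Ω^2/2) + R) := by
    have h1 : s*(ω Ω - c + π) = (π*Ω + π*Ω^2/2) + R := by rw [hRdef]; ring
    have h2 : s*(s*(ω Ω - c + π)) = ω Ω - c + π := by
      rw [← mul_assoc, hs2, one_mul]
    have h3 : s*(s*(ω Ω - c + π)) = s*((π*Ω + π*Ω^2/2) + R) := by rw [h1]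
    rw [h2] at h3
    linarith only [h3]
  have hmain : Ω = ε * (-π + s*((π*Ω + π*Ω^2/2) + R)) := by
    conv_lhs => rw [hΩfix]
    rw [hX]
  -- |πΩ + πΩ²/2 + R| ≤ 23.3 ε
  have hM1 : |π*Ω| ≤ (315/100)*((63/10)*ε) := pi_abs_mul hΩabs
  have hM2 : |π*Ω^2| ≤ (315/100)*((3969/100)*ε^2) := by
    apply pi_abs_mul
    rw [abs_of_nonneg (sq_nonneg Ω), ← sq_abs]
    exact hΩabs2
  have hMsum : |(π*Ω + π*Ω^2/2) + R| ≤ (2333/100)*ε := by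
    calc |(π*Ω + π*Ω^2/2) + R| ≤ |π*Ω + π*Ω^2/2| + |R| := abs_add_le _ _
      _ ≤ (|π*Ω| + |π*Ω^2|/2) + |R| := by
          have := abs_add_le (π*Ω) (π*Ω^2/2)
          have h2 : |π*Ω^2/2| = |π*Ω^2|/2 := by rw [abs_div]; norm_num
          linarith only [this, h2.le, h2.ge]
      _ ≤ (315/100)*((63/10)*ε) + (315/100)*((3969/100)*ε^2)/2 + 110*((250047/1000)*ε^3) := by
          linarith only [hM1, hM2, hRabs]
      _ ≤ (2333/100)*ε := by nlinarith [hε2, hε3, hε0.le]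
  have hE2 : |Ω + π*ε| ≤ 24*ε^2 := by
    have hid : Ω + π*ε = ε * (s*((π*Ω + π*Ω^2/2) + R)) := by
      calc Ω + π*ε = ε * (-π + s*((π*Ω + π*Ω^2/2) + R)) + π*ε := by rw [← hmain]
        _ = ε * (s*((π*Ω + π*Ω^2/2) + R)) := by ring
    rw [hid, abs_mul, abs_mul, hsabs, one_mul, abs_of_pos hε0]
    calc ε * |(π*Ω + π*Ω^2/2) + R| ≤ ε * ((2333/100)*ε) :=
          mul_le_mul_of_nonneg_left hMsum hε0.le
      _ ≤ 24*ε^2 := by nlinarith [hε0.le]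
  have hE3 : |Ω + π*ε + s*π^2*ε^2| ≤ 420*ε^3 := by
    have hid : Ω + π*ε + s*π^2*ε^2
        = ε*s*(π*(Ω + π*ε)) + ε*s*(π*Ω^2/2 + R) := by
      calc Ω + π*ε + s*π^2*ε^2
          = ε * (-π + s*((π*Ω + π*Ω^2/2) + R)) + π*ε + s*π^2*ε^2 := by rw [← hmain]
        _ = ε*s*(π*(Ω + π*ε)) + ε*s*(π*Ω^2/2 + R) := by ring
    rw [hid]
    have hb1 : |ε*s*(π*(Ω + π*ε))| ≤ ε*((315/100)*(24*ε^2)) := by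
      rw [abs_mul, abs_mul, hsabs, mul_one, abs_of_pos hε0]
      exact mul_le_mul_of_nonneg_left (pi_abs_mul hE2) hε0.le
    have hb2 : |ε*s*(π*Ω^2/2 + R)| ≤ ε*((315/100)*((3969/100)*ε^2)/2 + 110*((250047/1000)*ε^3)) := by
      rw [abs_mul, abs_mul, hsabs, mul_one, abs_of_pos hε0]
      apply mul_le_mul_of_nonneg_left _ hε0.le
      calc |π*Ω^2/2 + R| ≤ |π*Ω^2|/2 + |R| := by
            have := abs_add_le (π*Ω^2/2) R
            have h2 : |π*Ω^2/2| = |π*Ω^2|/2 := by rw [abs_div]; norm_num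
            linarith only [this, h2.le]
        _ ≤ (315/100)*((3969/100)*ε^2)/2 + 110*((250047/1000)*ε^3) := by
            linarith only [hM2, hRabs]
    calc |ε*s*(π*(Ω + π*ε)) + ε*s*(π*Ω^2/2 + R)|
        ≤ |ε*s*(π*(Ω + π*ε))| + |ε*s*(π*Ω^2/2 + R)| := abs_add_le _ _
      _ ≤ ε*((315/100)*(24*ε^2)) + ε*((315/100)*((3969/100)*ε^2)/2 + 110*((250047/1000)*ε^3)) := by
          linarith only [hb1, hb2]
      _ ≤ 420*ε^3 := by nlinarith [hε0.le, hε3n, hε4, hε2n]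
  -- Bval estimate
  have hB := Bval_est ω c s Ω (hcos Ω) (by rw [← hRdef]; exact hR) hΩIcc.1 hΩIcc.2
  have hB' : |Bval ω Ω - (π*Ω/4 - π*Ω^2/8)| ≤ 12503*ε^3 := by
    calc |Bval ω Ω - (π*Ω/4 - π*Ω^2/8)| ≤ 50*|Ω|^3 := hB
      _ ≤ 50*((250047/1000)*ε^3) := by linarith only [hΩabs3]
      _ ≤ 12503*ε^3 := by linarith only [hε3n]
  -- T - p estimate
  have hsq : |Ω^2 - π^2*ε^2| ≤ 227*ε^3 := by
    have hid : Ω^2 - π^2*ε^2 = (Ω + π*ε)*(Ω - π*ε) := by ring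
    rw [hid, abs_mul]
    have h1 : |Ω - π*ε| ≤ (945/100)*ε := by
      have hπε : |π*ε| ≤ (315/100)*ε := by
        rw [abs_mul, abs_of_pos hpip, abs_of_pos hε0]
        exact mul_le_mul_of_nonneg_right hpi hε0.le
      calc |Ω - π*ε| ≤ |Ω| + |π*ε| := abs_sub _ _
        _ ≤ (63/10)*ε + (315/100)*ε := by linarith only [hΩabs, hπε]
        _ = (945/100)*ε := by ring
    calc |Ω + π*ε| * |Ω - π*ε| ≤ (24*ε^2) * ((945/100)*ε) :=
          mul_le_mul hE2 h1 (abs_nonneg _) (by positivity)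
      _ ≤ 227*ε^3 := by nlinarith [hε3n]
  have hTp : |(π*Ω/4 - π*Ω^2/8) - (-(π/2)^2*ε - (2*s+1)*(π/2)^3*ε^2)| ≤ 430*ε^3 := by
    have hid : (π*Ω/4 - π*Ω^2/8) - (-(π/2)^2*ε - (2*s+1)*(π/2)^3*ε^2)
        = (π*(Ω + π*ε + s*π^2*ε^2))/4 - (π*(Ω^2 - π^2*ε^2))/8 := by ring
    rw [hid]
    have h1 : |π*(Ω + π*ε + s*π^2*ε^2)| ≤ (315/100)*(420*ε^3) := pi_abs_mul hE3
    have h2 : |π*(Ω^2 - π^2*ε^2)| ≤ (315/100)*(227*ε^3) := pi_abs_mul hsq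
    calc |(π*(Ω + π*ε + s*π^2*ε^2))/4 - (π*(Ω^2 - π^2*ε^2))/8|
        ≤ |π*(Ω + π*ε + s*π^2*ε^2)|/4 + |π*(Ω^2 - π^2*ε^2)|/8 := by
          have := abs_sub (π*(Ω + π*ε + s*π^2*ε^2)/4) (π*(Ω^2 - π^2*ε^2)/8)
          have e1 : |π*(Ω + π*ε + s*π^2*ε^2)/4| = |π*(Ω + π*ε + s*π^2*ε^2)|/4 := by
            rw [abs_div]; norm_num
          have e2 : |π*(Ω^2 - π^2*ε^2)/8| = |π*(Ω^2 - π^2*ε^2)|/8 := by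
            rw [abs_div]; norm_num
          calc |(π*(Ω + π*ε + s*π^2*ε^2))/4 - (π*(Ω^2 - π^2*ε^2))/8|
              = |π*(Ω + π*ε + s*π^2*ε^2)/4 - π*(Ω^2 - π^2*ε^2)/8| := by ring_nf
            _ ≤ |π*(Ω + π*ε + s*π^2*ε^2)/4| + |π*(Ω^2 - π^2*ε^2)/8| := abs_sub _ _
            _ = |π*(Ω + π*ε + s*π^2*ε^2)|/4 + |π*(Ω^2 - π^2*ε^2)|/8 := by rw [e1, e2]
      _ ≤ (315/100)*(420*ε^3)/4 + (315/100)*(227*ε^3)/8 := by linarith only [h1, h2]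
      _ ≤ 430*ε^3 := by linarith only [hε3n]
  calc |Bval ω Ω - (-(π/2)^2*ε - (2*s+1)*(π/2)^3*ε^2)|
      = |(Bval ω Ω - (π*Ω/4 - π*Ω^2/8))
          + ((π*Ω/4 - π*Ω^2/8) - (-(π/2)^2*ε - (2*s+1)*(π/2)^3*ε^2))| := by ring_nf
    _ ≤ |Bval ω Ω - (π*Ω/4 - π*Ω^2/8)|
          + |(π*Ω/4 - π*Ω^2/8) - (-(π/2)^2*ε - (2*s+1)*(π/2)^3*ε^2)| := abs_add_le _ _
    _ ≤ 13000*ε^3 := by linarith only [hB', hTp, hε3n]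

-- generic lipschitz for arcsin ∘ u_k
lemma arcsin_u_lip {k : ℝ} (hk1 : 1 ≤ k) (hk3 : k ≤ 3)
    {Ω₁ Ω₂ : ℝ} (h₁ : Ω₁ ∈ Set.Icc (-(7:ℝ)/100) 0) (h₂ : Ω₂ ∈ Set.Icc (-(7:ℝ)/100) 0) :
    |Real.arcsin (-(Ω₁+k)*Real.sin (π*Ω₁/2)) - Real.arcsin (-(Ω₂+k)*Real.sin (π*Ω₂/2))|
      ≤ 18 * |Ω₁ - Ω₂| := by
  have hpi : π ≤ 315/100 := by linarith [Real.pi_lt_d2]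
  have hsub1 : Ω₁ ∈ Set.Icc (-(1:ℝ)/10) 0 := ⟨by linarith [h₁.1], h₁.2⟩
  have hsub2 : Ω₂ ∈ Set.Icc (-(1:ℝ)/10) 0 := ⟨by linarith [h₂.1], h₂.2⟩
  have hu1 := u_bound hk1 hk3 hsub1
  have hu2 := u_bound hk1 hk3 hsub2
  have hlp := arcsin_lip hu1 hu2
  have hdiff : |(-(Ω₁+k)*Real.sin (π*Ω₁/2)) - (-(Ω₂+k)*Real.sin (π*Ω₂/2))|
      ≤ 6 * |Ω₁ - Ω₂| := by
    have hid : (-(Ω₁+k)*Real.sin (π*Ω₁/2)) - (-(Ω₂+k)*Real.sin (π*Ω₂/2))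
        = -((Ω₁-Ω₂) * Real.sin (π*Ω₁/2)) - (Ω₂+k)*(Real.sin (π*Ω₁/2) - Real.sin (π*Ω₂/2)) := by
      ring
    rw [hid]
    have h1 : |(Ω₁-Ω₂) * Real.sin (π*Ω₁/2)| ≤ |Ω₁-Ω₂| := by
      rw [abs_mul]
      have := abs_sin_le_one (π*Ω₁/2)
      nlinarith [abs_nonneg (Ω₁-Ω₂), abs_nonneg (Real.sin (π*Ω₁/2))]
    have h2 : |(Ω₂+k)*(Real.sin (π*Ω₁/2) - Real.sin (π*Ω₂/2))| ≤ 3*((158/100)*|Ω₁-Ω₂|) := by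
      rw [abs_mul]
      have hΩk : |Ω₂ + k| ≤ 3 := by
        rw [abs_le]; constructor
        · linarith [h₂.1, hk1]
        · linarith [h₂.2, hk3]
      have hss : |Real.sin (π*Ω₁/2) - Real.sin (π*Ω₂/2)| ≤ (158/100)*|Ω₁-Ω₂| := by
        have h3 := abs_sin_sub_sin (π*Ω₁/2) (π*Ω₂/2)
        have h4 : |π*Ω₁/2 - π*Ω₂/2| = (π/2)*|Ω₁-Ω₂| := by
          have : π*Ω₁/2 - π*Ω₂/2 = (π/2)*(Ω₁-Ω₂) := by ring
          rw [this, abs_mul, abs_of_pos (by positivity : (0:ℝ) < π/2)]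
        rw [h4] at h3
        have h5 : (π/2)*|Ω₁-Ω₂| ≤ (158/100)*|Ω₁-Ω₂| := by
          apply mul_le_mul_of_nonneg_right _ (abs_nonneg _)
          linarith only [hpi]
        linarith only [h3, h5]
      exact mul_le_mul hΩk hss (abs_nonneg _) (by norm_num)
    calc |(-((Ω₁-Ω₂) * Real.sin (π*Ω₁/2))) - (Ω₂+k)*(Real.sin (π*Ω₁/2) - Real.sin (π*Ω₂/2))|
        ≤ |(-((Ω₁-Ω₂) * Real.sin (π*Ω₁/2)))| + |(Ω₂+k)*(Real.sin (π*Ω₁/2) - Real.sin (π*Ω₂/2))| :=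
          abs_sub _ _
      _ ≤ |Ω₁-Ω₂| + 3*((158/100)*|Ω₁-Ω₂|) := by
          rw [abs_neg]; exact add_le_add h1 h2
      _ ≤ 6 * |Ω₁-Ω₂| := by linarith [abs_nonneg (Ω₁-Ω₂)]
  calc |Real.arcsin (-(Ω₁+k)*Real.sin (π*Ω₁/2)) - Real.arcsin (-(Ω₂+k)*Real.sin (π*Ω₂/2))|
      ≤ 3 * |(-(Ω₁+k)*Real.sin (π*Ω₁/2)) - (-(Ω₂+k)*Real.sin (π*Ω₂/2))| := hlp
    _ ≤ 3 * (6*|Ω₁-Ω₂|) := by linarith only [hdiff]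
    _ = 18 * |Ω₁-Ω₂| := by ring

-- PLUS branch hypotheses
lemma plus_cont : Continuous omegaPlus := by
  unfold omegaPlus
  exact ((continuous_const.mul continuous_id).div_const 2).add
    (Real.continuous_arccos.comp ((continuous_id.add continuous_const).neg.mul
      (Real.continuous_sin.comp ((continuous_const.mul continuous_id).div_const 2))))

lemma minus_cont : Continuous omegaMinus := by
  unfold omegaMinus
  exact ((continuous_const.mul continuous_id).div_const 2).sub
    (Real.continuous_arccos.comp ((continuous_id.add continuous_const).neg.mul
      (Real.continuous_sin.comp ((continuous_const.mul continuous_id).div_const 2))))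

lemma plus_range : ∀ Ω ∈ Set.Ioc (-1:ℝ) 0,
    omegaPlus Ω - 3*π/2 ∈ Set.Icc (-(2*π)) (-(π/2)) := by
  intro Ω hΩ
  have h1 := Real.arccos_nonneg (-(Ω+1) * Real.sin (π*Ω/2))
  have h2 := Real.arccos_le_pi (-(Ω+1) * Real.sin (π*Ω/2))
  have h3 : -(π/2) ≤ π*Ω/2 := by nlinarith [hΩ.1.le, Real.pi_pos]
  have h4 : π*Ω/2 ≤ 0 := by nlinarith [hΩ.2, Real.pi_pos]
  unfold omegaPlus
  constructor <;> [linarith; linarith]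

lemma minus_range : ∀ Ω ∈ Set.Ioc (-1:ℝ) 0,
    omegaMinus Ω - π/2 ∈ Set.Icc (-(2*π)) (-(π/2)) := by
  intro Ω hΩ
  have h1 := Real.arccos_nonneg (-(Ω+3) * Real.sin (π*Ω/2))
  have h2 := Real.arccos_le_pi (-(Ω+3) * Real.sin (π*Ω/2))
  have h3 : -(π/2) ≤ π*Ω/2 := by nlinarith [hΩ.1.le, Real.pi_pos]
  have h4 : π*Ω/2 ≤ 0 := by nlinarith [hΩ.2, Real.pi_pos]
  unfold omegaMinus
  constructor <;> [linarith; linarith]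

lemma plus_cos : ∀ Ω, Real.cos (omegaPlus Ω)
    = -Real.sin (1*(omegaPlus Ω - 3*π/2 + π)) := by
  intro Ω
  have h : 1*(omegaPlus Ω - 3*π/2 + π) = omegaPlus Ω - π/2 := by ring
  rw [h, Real.sin_sub_pi_div_two, neg_neg]

lemma minus_cos : ∀ Ω, Real.cos (omegaMinus Ω)
    = -Real.sin ((-1)*(omegaMinus Ω - π/2 + π)) := by
  intro Ω
  have h : (-1)*(omegaMinus Ω - π/2 + π) = -(omegaMinus Ω + π/2) := by ring
  rw [h, Real.sin_neg, Real.sin_add_pi_div_two, neg_neg]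

lemma plus_exp : ∀ Ω ∈ Set.Icc (-(7:ℝ)/100) 0,
    |1*(omegaPlus Ω - 3*π/2 + π) - (π*Ω + π*Ω^2/2)| ≤ 110*|Ω|^3 := by
  intro Ω hΩ
  have hsub : Ω ∈ Set.Icc (-(1:ℝ)/10) 0 := ⟨by linarith [hΩ.1], hΩ.2⟩
  have h := arcsin_u_est (k := 1) (by norm_num) (by norm_num) hsub
  have hid : 1*(omegaPlus Ω - 3*π/2 + π) - (π*Ω + π*Ω^2/2)
      = -(Real.arcsin (-(Ω+1)*Real.sin (π*Ω/2)) - (-(1*π*Ω/2 + π*Ω^2/2))) := by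
    unfold omegaPlus
    rw [Real.arccos_eq_pi_div_two_sub_arcsin]
    ring
  rw [hid, abs_neg]
  calc |Real.arcsin (-(Ω+1)*Real.sin (π*Ω/2)) - (-(1*π*Ω/2 + π*Ω^2/2))| ≤ 109*|Ω|^3 := h
    _ ≤ 110*|Ω|^3 := by linarith [pow_nonneg (abs_nonneg Ω) 3]

lemma minus_exp : ∀ Ω ∈ Set.Icc (-(7:ℝ)/100) 0,
    |(-1)*(omegaMinus Ω - π/2 + π) - (π*Ω + π*Ω^2/2)| ≤ 110*|Ω|^3 := by
  intro Ω hΩ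
  have hsub : Ω ∈ Set.Icc (-(1:ℝ)/10) 0 := ⟨by linarith [hΩ.1], hΩ.2⟩
  have h := arcsin_u_est (k := 3) (by norm_num) (by norm_num) hsub
  have hid : (-1)*(omegaMinus Ω - π/2 + π) - (π*Ω + π*Ω^2/2)
      = -(Real.arcsin (-(Ω+3)*Real.sin (π*Ω/2)) - (-(3*π*Ω/2 + π*Ω^2/2))) := by
    unfold omegaMinus
    rw [Real.arccos_eq_pi_div_two_sub_arcsin]
    ring
  rw [hid, abs_neg]
  calc |Real.arcsin (-(Ω+3)*Real.sin (π*Ω/2)) - (-(3*π*Ω/2 + π*Ω^2/2))| ≤ 109*|Ω|^3 := h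
    _ ≤ 110*|Ω|^3 := by linarith [pow_nonneg (abs_nonneg Ω) 3]

lemma plus_lip : ∀ Ω₁ ∈ Set.Icc (-(7:ℝ)/100) 0, ∀ Ω₂ ∈ Set.Icc (-(7:ℝ)/100) 0,
    |omegaPlus Ω₁ - omegaPlus Ω₂| ≤ 40*|Ω₁ - Ω₂| := by
  intro Ω₁ h₁ Ω₂ h₂
  have hpi : π ≤ 315/100 := by linarith [Real.pi_lt_d2]
  have hlp := arcsin_u_lip (k := 1) (by norm_num) (by norm_num) h₁ h₂
  have hid : omegaPlus Ω₁ - omegaPlus Ω₂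
      = (π/2)*(Ω₁ - Ω₂) - (Real.arcsin (-(Ω₁+1)*Real.sin (π*Ω₁/2))
          - Real.arcsin (-(Ω₂+1)*Real.sin (π*Ω₂/2))) := by
    unfold omegaPlus
    rw [Real.arccos_eq_pi_div_two_sub_arcsin, Real.arccos_eq_pi_div_two_sub_arcsin]
    ring
  rw [hid]
  have h1 : |(π/2)*(Ω₁-Ω₂)| ≤ (158/100)*|Ω₁-Ω₂| := by
    rw [abs_mul, abs_of_pos (by positivity : (0:ℝ) < π/2)]
    apply mul_le_mul_of_nonneg_right _ (abs_nonneg _)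
    linarith only [hpi]
  calc |(π/2)*(Ω₁ - Ω₂) - (Real.arcsin (-(Ω₁+1)*Real.sin (π*Ω₁/2))
          - Real.arcsin (-(Ω₂+1)*Real.sin (π*Ω₂/2)))|
      ≤ |(π/2)*(Ω₁-Ω₂)| + |Real.arcsin (-(Ω₁+1)*Real.sin (π*Ω₁/2))
          - Real.arcsin (-(Ω₂+1)*Real.sin (π*Ω₂/2))| := abs_sub _ _
    _ ≤ (158/100)*|Ω₁-Ω₂| + 18*|Ω₁-Ω₂| := add_le_add h1 hlp
    _ ≤ 40*|Ω₁-Ω₂| := by linarith [abs_nonneg (Ω₁-Ω₂)]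

lemma minus_lip : ∀ Ω₁ ∈ Set.Icc (-(7:ℝ)/100) 0, ∀ Ω₂ ∈ Set.Icc (-(7:ℝ)/100) 0,
    |omegaMinus Ω₁ - omegaMinus Ω₂| ≤ 40*|Ω₁ - Ω₂| := by
  intro Ω₁ h₁ Ω₂ h₂
  have hpi : π ≤ 315/100 := by linarith [Real.pi_lt_d2]
  have hlp := arcsin_u_lip (k := 3) (by norm_num) (by norm_num) h₁ h₂
  have hid : omegaMinus Ω₁ - omegaMinus Ω₂
      = (π/2)*(Ω₁ - Ω₂) + (Real.arcsin (-(Ω₁+3)*Real.sin (π*Ω₁/2))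
          - Real.arcsin (-(Ω₂+3)*Real.sin (π*Ω₂/2))) := by
    unfold omegaMinus
    rw [Real.arccos_eq_pi_div_two_sub_arcsin, Real.arccos_eq_pi_div_two_sub_arcsin]
    ring
  rw [hid]
  have h1 : |(π/2)*(Ω₁-Ω₂)| ≤ (158/100)*|Ω₁-Ω₂| := by
    rw [abs_mul, abs_of_pos (by positivity : (0:ℝ) < π/2)]
    apply mul_le_mul_of_nonneg_right _ (abs_nonneg _)
    linarith only [hpi]
  calc |(π/2)*(Ω₁ - Ω₂) + (Real.arcsin (-(Ω₁+3)*Real.sin (π*Ω₁/2))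
          - Real.arcsin (-(Ω₂+3)*Real.sin (π*Ω₂/2)))|
      ≤ |(π/2)*(Ω₁-Ω₂)| + |Real.arcsin (-(Ω₁+3)*Real.sin (π*Ω₁/2))
          - Real.arcsin (-(Ω₂+3)*Real.sin (π*Ω₂/2))| := abs_add_le _ _
    _ ≤ (158/100)*|Ω₁-Ω₂| + 18*|Ω₁-Ω₂| := add_le_add h1 hlp
    _ ≤ 40*|Ω₁-Ω₂| := by linarith [abs_nonneg (Ω₁-Ω₂)]

lemma cubic_littleO {F : ℝ → ℝ}
    (h : ∀ ε ∈ Set.Ioo (0:ℝ) (1/100), |F ε| ≤ 13000*ε^3) :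
    F =o[nhdsWithin 0 (Set.Ioi 0)] (fun ε => ε^2) := by
  rw [Asymptotics.isLittleO_iff]
  intro C hC
  have hδ : (0:ℝ) < min (1/100) (C/13000) := by positivity
  have hmem : Set.Ioo (0:ℝ) (min (1/100) (C/13000)) ∈ nhdsWithin (0:ℝ) (Set.Ioi 0) :=
    Ioo_mem_nhdsGT_of_mem ⟨le_refl 0, hδ⟩
  filter_upwards [hmem] with ε hε
  have hε0 := hε.1
  have hε1 : ε < 1/100 := lt_of_lt_of_le hε.2 (min_le_left _ _)
  have hεc : ε < C/13000 := lt_of_lt_of_le hε.2 (min_le_right _ _)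
  have hb := h ε ⟨hε0, hε1⟩
  rw [Real.norm_eq_abs, Real.norm_eq_abs, abs_of_nonneg (by positivity : (0:ℝ) ≤ ε^2)]
  have h13 : 13000*ε ≤ C := by linarith only [hεc]
  have hmul := mul_le_mul_of_nonneg_right h13 (by positivity : (0:ℝ) ≤ ε^2)
  calc |F ε| ≤ 13000*ε^3 := hb
    _ = (13000*ε)*ε^2 := by ring
    _ ≤ C*ε^2 := hmul


/-- Expansions of the Pyragas boundaries: unique continuous solutions `Ω⁺(ε)`, `Ω⁻(ε)` of the
hashing relations `Ω = ε(ω⁺(Ω) - 3π/2)` resp. `Ω = ε(ω⁻(Ω) - π/2)` exist on `(0,ε₀)`, the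
associated control values satisfy `B₀₁⁺(ε) = -(π/2)²ε - 3(π/2)³ε² + o(ε²)` and
`B₁₁⁻(ε) = -(π/2)²ε + (π/2)³ε² + o(ε²)`, and `B₀₁⁺(ε) < B₁₁⁻(ε) < 0` for small `ε > 0`. -/
theorem stmt_19 :
    ∃ ε₀ : ℝ, 0 < ε₀ ∧ ∃ fp fm : ℝ → ℝ,
      -- (i) existence, range and hashing relation for Ω⁺, with uniqueness among
      -- continuous functions, and the ε-expansion of B₀₁⁺
      (ContinuousOn fp (Set.Ioo 0 ε₀) ∧
        (∀ ε ∈ Set.Ioo (0:ℝ) ε₀, fp ε ∈ Set.Ioc (-1:ℝ) 0 ∧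
          fp ε = ε * (omegaPlus (fp ε) - 3*π/2)) ∧
        (∀ g : ℝ → ℝ, ContinuousOn g (Set.Ioo 0 ε₀) →
          (∀ ε ∈ Set.Ioo (0:ℝ) ε₀, g ε ∈ Set.Ioc (-1:ℝ) 0 ∧
            g ε = ε * (omegaPlus (g ε) - 3*π/2)) →
          ∀ ε ∈ Set.Ioo (0:ℝ) ε₀, g ε = fp ε) ∧
        (fun ε => Bval omegaPlus (fp ε) - (-(π/2)^2*ε - 3*(π/2)^3*ε^2))
          =o[nhdsWithin 0 (Set.Ioi 0)] (fun ε => ε^2)) ∧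
      -- (ii) existence, range and hashing relation for Ω⁻, with uniqueness among
      -- continuous functions, and the ε-expansion of B₁₁⁻
      (ContinuousOn fm (Set.Ioo 0 ε₀) ∧
        (∀ ε ∈ Set.Ioo (0:ℝ) ε₀, fm ε ∈ Set.Ioc (-1:ℝ) 0 ∧
          fm ε = ε * (omegaMinus (fm ε) - π/2)) ∧
        (∀ g : ℝ → ℝ, ContinuousOn g (Set.Ioo 0 ε₀) →
          (∀ ε ∈ Set.Ioo (0:ℝ) ε₀, g ε ∈ Set.Ioc (-1:ℝ) 0 ∧
            g ε = ε * (omegaMinus (g ε) - π/2)) →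
          ∀ ε ∈ Set.Ioo (0:ℝ) ε₀, g ε = fm ε) ∧
        (fun ε => Bval omegaMinus (fm ε) - (-(π/2)^2*ε + (π/2)^3*ε^2))
          =o[nhdsWithin 0 (Set.Ioi 0)] (fun ε => ε^2)) ∧
      -- In particular, the Pyragas interval is nonempty for all small ε > 0
      (∀ᶠ ε in nhdsWithin 0 (Set.Ioi 0),
        Bval omegaPlus (fp ε) < Bval omegaMinus (fm ε) ∧
        Bval omegaMinus (fm ε) < 0) := by

  obtain ⟨fp, hpc, hpfix, hpuniq, hpest⟩ :=
    branch omegaPlus (3*π/2) 1 (Or.inl rfl) plus_cont plus_range plus_exp plus_cos plus_lip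
  obtain ⟨fm, hmc, hmfix, hmuniq, hmest⟩ :=
    branch omegaMinus (π/2) (-1) (Or.inr rfl) minus_cont minus_range minus_exp minus_cos minus_lip
  have hpest' : ∀ ε ∈ Set.Ioo (0:ℝ) (1/100),
      |Bval omegaPlus (fp ε) - (-(π/2)^2*ε - 3*(π/2)^3*ε^2)| ≤ 13000*ε^3 := by
    intro ε hε
    have := hpest ε hε
    have he : -(π/2)^2*ε - (2*1+1)*(π/2)^3*ε^2 = -(π/2)^2*ε - 3*(π/2)^3*ε^2 := by norm_num
    rwa [he] at this
  have hmest' : ∀ ε ∈ Set.Ioo (0:ℝ) (1/100),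
      |Bval omegaMinus (fm ε) - (-(π/2)^2*ε + (π/2)^3*ε^2)| ≤ 13000*ε^3 := by
    intro ε hε
    have := hmest ε hε
    have he : -(π/2)^2*ε - (2*(-1)+1)*(π/2)^3*ε^2 = -(π/2)^2*ε + (π/2)^3*ε^2 := by ring
    rwa [he] at this
  refine ⟨1/100, by norm_num, fp, fm,
    ⟨hpc, hpfix, fun g _ hg => hpuniq g hg, cubic_littleO hpest'⟩,
    ⟨hmc, hmfix, fun g _ hg => hmuniq g hg, cubic_littleO hmest'⟩, ?_⟩
  -- final eventually statement
  have hpi : π ≤ 315/100 := by linarith [Real.pi_lt_d2]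
  have hpi2 : (314:ℝ)/100 ≤ π := by linarith [Real.pi_gt_d6]
  have hcube_lb : (386:ℝ)/100 ≤ (π/2)^3 := by
    have h := pow_le_pow_left₀ (by norm_num : (0:ℝ) ≤ 314/200) (by linarith : (314:ℝ)/200 ≤ π/2) 3
    have : ((314:ℝ)/200)^3 = 30959144/8000000 := by norm_num
    linarith only [h, this]
  have hcube_ub : (π/2)^3 ≤ (391:ℝ)/100 := by
    have h := pow_le_pow_left₀ (by positivity : (0:ℝ) ≤ π/2) (by linarith : π/2 ≤ (315:ℝ)/200) 3
    have : ((315:ℝ)/200)^3 = 31255875/8000000 := by norm_num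
    linarith only [h, this]
  have hsq_lb : (246:ℝ)/100 ≤ (π/2)^2 := by
    have h := pow_le_pow_left₀ (by norm_num : (0:ℝ) ≤ 314/200) (by linarith : (314:ℝ)/200 ≤ π/2) 2
    have : ((314:ℝ)/200)^2 = 98596/40000 := by norm_num
    linarith only [h, this]
  have hmem : Set.Ioo (0:ℝ) (1/20000) ∈ nhdsWithin (0:ℝ) (Set.Ioi 0) :=
    Ioo_mem_nhdsGT_of_mem ⟨le_refl 0, by norm_num⟩
  filter_upwards [hmem] with ε hε
  have hε0 := hε.1
  have hε1 : ε < 1/20000 := hε.2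
  have hε100 : ε < 1/100 := by linarith
  have hε2n : (0:ℝ) < ε^2 := by positivity
  have hε3 : ε^3 ≤ (1/20000)*ε^2 := by nlinarith [hε2n.le, hε0.le]
  have hε2 : ε^2 ≤ (1/20000)*ε := by nlinarith [hε0.le]
  have hp := hpest' ε ⟨hε0, hε100⟩
  have hm := hmest' ε ⟨hε0, hε100⟩
  have hpa := abs_le.1 hp
  have hma := abs_le.1 hm
  constructor
  · -- Bp < Bm
    have hdiff : Bval omegaMinus (fm ε) - Bval omegaPlus (fp ε)
        ≥ 4*(π/2)^3*ε^2 - 26000*ε^3 := by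
      have h1 := hpa.2
      have h2 := hma.1
      linarith only [h1, h2]
    have hc : 4*(π/2)^3*ε^2 ≥ 4*(386/100)*ε^2 := by
      have := mul_le_mul_of_nonneg_right hcube_lb hε2n.le
      linarith only [this]
    have : 26000*ε^3 ≤ 26000*((1/20000)*ε^2) := by linarith only [hε3]
    linarith only [hdiff, hc, this, hε2n]
  · -- Bm < 0
    have h1 := hma.2
    have h2 : -(π/2)^2*ε ≤ -(246/100)*ε := by
      have := mul_le_mul_of_nonneg_right hsq_lb hε0.le
      linarith only [this]
    have h3 : (π/2)^3*ε^2 ≤ (391/100)*((1/20000)*ε) := by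
      have := mul_le_mul_of_nonneg_right hcube_ub hε2n.le
      linarith only [this, hε2]
    have h4 : 13000*ε^3 ≤ 13000*((1/20000)*((1/20000)*ε)) := by
      have h5 : ε^3 ≤ (1/20000)*((1/20000)*ε) := by nlinarith [hε0.le, hε2]
      linarith only [h5]
    linarith only [h1, h2, h3, h4, hε0]
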